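/- Let 𝓗 be the adjacency matrix of the line graph of the complete graph K_n (n ≥ 4), m = (n choose 2). Then the eigenvalues of 𝓗 are 2n-4 with multiplicity 1, n-4 with multiplicity n-1, and -2 with multiplicity m-n. -/

import Mathlib

/-- Edges of `K_n`: unordered pairs of vertices, represented as ordered pairs `(a,b)`, `a < b`. -/
def PairIdx (n : ℕ) := {p : Fin n × Fin n // p.1 < p.2}

instance (n : ℕ) : Fintype (PairIdx n) := by unfold PairIdx; infer_instance
instance (n : ℕ) : DecidableEq (PairIdx n) := by unfold PairIdx; infer_instance

/-- The adjacency matrix of the line graph of `K_n`: two edges are adjacent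
iff they share exactly one vertex. -/
def lineAdj (n : ℕ) : Matrix (PairIdx n) (PairIdx n) ℝ := fun e f =>
  if e ≠ f ∧ (e.val.1 = f.val.1 ∨ e.val.1 = f.val.2 ∨ e.val.2 = f.val.1 ∨ e.val.2 = f.val.2)
  then 1 else 0

open Matrix Polynomial Finset

lemma card_pairIdx (n : ℕ) : Fintype.card (PairIdx n) = n * (n - 1) / 2 := by
  have h0 : Fintype.card (PairIdx n)
      = (univ.filter fun p : Fin n × Fin n => p.1 < p.2).card := by
    rw [Fintype.card_congr (Equiv.cast (show PairIdx n = {p : Fin n × Fin n // p.1 < p.2} from rfl))]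
    rw [Fintype.card_subtype]
  have hswap : (univ.filter fun p : Fin n × Fin n => p.1 < p.2).card
      = (univ.filter fun p : Fin n × Fin n => p.2 < p.1).card := by
    apply Finset.card_bij' (fun p _ => Prod.swap p) (fun p _ => Prod.swap p) <;>
      simp [Finset.mem_filter]
  have hdiag : (univ.filter fun p : Fin n × Fin n => p.1 = p.2).card = n := by
    rw [show (univ.filter fun p : Fin n × Fin n => p.1 = p.2)
        = Finset.univ.image (fun v : Fin n => (v, v)) by
      ext p; simp [Finset.mem_filter, Finset.mem_image, Prod.ext_iff, eq_comm]
      ]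
    rw [Finset.card_image_of_injective _ (fun a b h => (Prod.ext_iff.1 h).1),
      Finset.card_univ, Fintype.card_fin]
  have htot := Finset.card_filter_add_card_filter_not
    (s := (univ : Finset (Fin n × Fin n))) (p := fun p => p.1 < p.2)
  have hneg : (univ.filter fun p : Fin n × Fin n => ¬ p.1 < p.2).card
      = n + (univ.filter fun p : Fin n × Fin n => p.1 < p.2).card := by
    rw [show (univ.filter fun p : Fin n × Fin n => ¬ p.1 < p.2)
        = (univ.filter fun p : Fin n × Fin n => p.1 = p.2)
          ∪ (univ.filter fun p : Fin n × Fin n => p.2 < p.1) by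
      ext p
      simp only [Finset.mem_filter, Finset.mem_union, Finset.mem_univ, true_and, not_lt]
      constructor
      · intro h; rcases lt_or_eq_of_le h with h | h
        · exact Or.inr h
        · exact Or.inl h.symm
      · rintro (h | h) <;> omega]
    rw [Finset.card_union_of_disjoint, hdiag, hswap]
    rw [Finset.disjoint_filter]
    intro p _ h1 h2
    omega
  have hsq : (univ : Finset (Fin n × Fin n)).card = n * n := by
    simp [Finset.card_univ]
  have hmul : n * (n - 1) = n * n - n := by
    rcases n with _ | k
    · simp
    · simp [Nat.succ_sub_one, Nat.mul_succ, Nat.succ_mul]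
  rw [h0, hmul]
  omega

def inc (n : ℕ) : Matrix (Fin n) (PairIdx n) ℝ := fun v e =>
  (if v = e.val.1 then 1 else 0) + (if v = e.val.2 then 1 else 0)

lemma sum_ite_ite (a b : Fin n) :
    (∑ v : Fin n, (if v = a then (1:ℝ) else 0) * (if v = b then 1 else 0))
      = if a = b then 1 else 0 := by
  rw [Finset.sum_eq_single a]
  · by_cases h : a = b <;> simp [h]
  · intro v _ hv; simp [hv]
  · simp

lemma gram_edge (n : ℕ) : (inc n)ᵀ * (inc n) = lineAdj n + (2 : ℝ) • 1 := by
  ext e f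
  simp only [Matrix.mul_apply, Matrix.transpose_apply, inc, Matrix.add_apply,
    Matrix.smul_apply, Matrix.one_apply, lineAdj, smul_eq_mul]
  obtain ⟨⟨a, b⟩, hab⟩ := e
  obtain ⟨⟨c, d⟩, hcd⟩ := f
  have expand : ∀ v : Fin n,
      ((if v = a then (1:ℝ) else 0) + (if v = b then 1 else 0))
        * ((if v = c then 1 else 0) + (if v = d then 1 else 0))
      = (if v = a then (1:ℝ) else 0) * (if v = c then 1 else 0)
        + (if v = a then (1:ℝ) else 0) * (if v = d then 1 else 0)
        + ((if v = b then (1:ℝ) else 0) * (if v = c then 1 else 0)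
        + (if v = b then (1:ℝ) else 0) * (if v = d then 1 else 0)) := by
    intro v; ring
  rw [Finset.sum_congr rfl (fun v _ => expand v)]
  rw [Finset.sum_add_distrib, Finset.sum_add_distrib, Finset.sum_add_distrib,
    sum_ite_ite, sum_ite_ite, sum_ite_ite, sum_ite_ite]
  have hab' : (a : ℕ) < b := hab
  have hcd' : (c : ℕ) < d := hcd
  have hsub : (@Eq (PairIdx n) ⟨(a, b), hab⟩ ⟨(c, d), hcd⟩) ↔ ((a:ℕ) = c ∧ (b:ℕ) = d) := by
    constructor
    · intro h
      have := congrArg Subtype.val h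
      rw [Prod.ext_iff] at this
      exact ⟨congrArg Fin.val this.1, congrArg Fin.val this.2⟩
    · rintro ⟨h1, h2⟩
      exact Subtype.ext (Prod.ext (Fin.ext h1) (Fin.ext h2))
  simp only [ne_eq, hsub, Fin.ext_iff]
  split_ifs <;> first | (exfalso; omega) | (exfalso; grind [Fin.ext_iff]) | norm_num

lemma sum_ite_ite' {n : ℕ} (a b : Fin n) :
    (∑ v : Fin n, (if a = v then (1:ℝ) else 0) * (if b = v then 1 else 0))
      = if a = b then 1 else 0 := by
  rw [Finset.sum_eq_single a]
  · by_cases h : a = b <;> simp [h, eq_comm]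
  · intro u _ hu
    have : ¬ a = u := fun h => hu h.symm
    simp [this]
  · simp

lemma sum_ite_single {n : ℕ} (a : Fin n) :
    (∑ v : Fin n, (if a = v then (1:ℝ) else 0)) = 1 := by
  simp

lemma gram_vertex (n : ℕ) (hn : 4 ≤ n) :
    inc n * (inc n)ᵀ
      = ((n : ℝ) - 2) • (1 : Matrix (Fin n) (Fin n) ℝ) + Matrix.of (fun _ _ => (1:ℝ)) := by
  ext v w
  set g : Fin n × Fin n → ℝ := fun p =>
    ((if v = p.1 then (1:ℝ) else 0) + (if v = p.2 then 1 else 0))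
      * ((if w = p.1 then (1:ℝ) else 0) + (if w = p.2 then 1 else 0)) with hg
  have hsym : ∀ p : Fin n × Fin n, g p.swap = g p := by
    intro p; simp only [hg, Prod.fst_swap, Prod.snd_swap]; ring
  -- sum over all ordered pairs
  have htot : (∑ p : Fin n × Fin n, g p)
      = 2 * (n : ℝ) * (if v = w then 1 else 0) + 2 := by
    rw [Fintype.sum_prod_type]
    have expand : ∀ p1 p2 : Fin n, g (p1, p2)
        = (if v = p1 then (1:ℝ) else 0) * (if w = p1 then 1 else 0)
          + (if v = p1 then (1:ℝ) else 0) * (if w = p2 then 1 else 0)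
          + ((if v = p2 then (1:ℝ) else 0) * (if w = p1 then 1 else 0)
          + (if v = p2 then (1:ℝ) else 0) * (if w = p2 then 1 else 0)) := by
      intro p1 p2; simp only [hg]; ring
    simp only [expand]
    simp only [Finset.sum_add_distrib, Finset.sum_const, Finset.card_univ,
      Fintype.card_fin, ← Finset.sum_mul, ← Finset.mul_sum, sum_ite_ite',
      sum_ite_single, nsmul_eq_mul]
    ring
  -- diagonal sum
  have hdiagset : (univ.filter fun p : Fin n × Fin n => p.1 = p.2)
      = Finset.univ.image (fun u : Fin n => (u, u)) := by
    ext p; simp [Finset.mem_filter, Finset.mem_image, Prod.ext_iff, eq_comm]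
  have hdiag : (∑ p ∈ univ.filter (fun p : Fin n × Fin n => p.1 = p.2), g p)
      = 4 * (if v = w then 1 else 0) := by
    rw [hdiagset, Finset.sum_image (fun a _ b _ h => (Prod.ext_iff.1 h).1)]
    have : ∀ u : Fin n, g (u, u)
        = 4 * ((if v = u then (1:ℝ) else 0) * (if w = u then 1 else 0)) := by
      intro u; simp only [hg]; ring
    simp only [this, ← Finset.mul_sum, sum_ite_ite']
  -- lt sum equals gt sum
  have hswap : (∑ p ∈ univ.filter (fun p : Fin n × Fin n => p.1 < p.2), g p)
      = (∑ p ∈ univ.filter (fun p : Fin n × Fin n => p.2 < p.1), g p) := by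
    apply Finset.sum_nbij' (fun p => Prod.swap p) (fun p => Prod.swap p) <;>
      simp [Finset.mem_filter, hsym]
  -- decomposition
  have hsplit : (∑ p : Fin n × Fin n, g p)
      = (∑ p ∈ univ.filter (fun p : Fin n × Fin n => p.1 < p.2), g p)
        + ((∑ p ∈ univ.filter (fun p : Fin n × Fin n => p.1 = p.2), g p)
          + (∑ p ∈ univ.filter (fun p : Fin n × Fin n => p.2 < p.1), g p)) := by
    rw [← Finset.sum_filter_add_sum_filter_not univ (fun p : Fin n × Fin n => p.1 < p.2) g]
    congr 1
    rw [show (univ.filter fun p : Fin n × Fin n => ¬ p.1 < p.2)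
        = (univ.filter fun p : Fin n × Fin n => p.1 = p.2)
          ∪ (univ.filter fun p : Fin n × Fin n => p.2 < p.1) by
      ext p
      simp only [Finset.mem_filter, Finset.mem_union, Finset.mem_univ, true_and, not_lt]
      constructor
      · intro h; rcases lt_or_eq_of_le h with h | h
        · exact Or.inr h
        · exact Or.inl h.symm
      · rintro (h | h) <;> omega]
    rw [Finset.sum_union]
    rw [Finset.disjoint_filter]
    intro p _ h1 h2
    omega
  -- the lt sum is the matrix entry
  have hentry : (inc n * (inc n)ᵀ) v w
      = ∑ p ∈ univ.filter (fun p : Fin n × Fin n => p.1 < p.2), g p := by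
    rw [Matrix.mul_apply]
    have step : (∑ j : PairIdx n, inc n v j * (inc n)ᵀ j w)
        = ∑ j : {p : Fin n × Fin n // p.1 < p.2}, g j.val := rfl
    rw [step,
      ← Finset.sum_subtype (univ.filter fun p : Fin n × Fin n => p.1 < p.2)
        (fun p => by simp) (g)]
  have hlt : (∑ p ∈ univ.filter (fun p : Fin n × Fin n => p.1 < p.2), g p)
      = ((n : ℝ) - 2) * (if v = w then 1 else 0) + 1 := by
    rw [hswap] at hsplit
    rw [htot, hdiag] at hsplit
    rw [hswap]
    linarith
  rw [hentry, hlt]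
  by_cases hvw : v = w <;>
    simp [Matrix.add_apply, Matrix.smul_apply, Matrix.one_apply, hvw] <;> ring

lemma eval_charpoly' {ι : Type*} [Fintype ι] [DecidableEq ι] (M : Matrix ι ι ℝ) (x : ℝ) :
    M.charpoly.eval x = (x • (1 : Matrix ι ι ℝ) - M).det := by
  rw [Matrix.charpoly, ← Polynomial.coe_evalRingHom, RingHom.map_det]
  congr 1
  ext i j
  by_cases h : i = j <;>
    simp [charmatrix_apply, h, Matrix.one_apply, diagonal_apply]

lemma det_smul_one_sub_J (n : ℕ) (hn : 1 ≤ n) (b : ℝ) (hb : b ≠ 0) :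
    (b • (1 : Matrix (Fin n) (Fin n) ℝ) - Matrix.of (fun _ _ => 1)).det
      = (b - n) * b ^ (n - 1) := by
  have key : b • (1 : Matrix (Fin n) (Fin n) ℝ) - Matrix.of (fun _ _ => 1)
      = b • ((1 : Matrix (Fin n) (Fin n) ℝ)
          + Matrix.replicateCol (Fin 1) (fun _ : Fin n => -b⁻¹) * Matrix.replicateRow (Fin 1) (fun _ : Fin n => (1:ℝ))) := by
    ext i j
    simp only [Matrix.sub_apply, Matrix.smul_apply, Matrix.add_apply, Matrix.one_apply,
      Matrix.of_apply, Matrix.mul_apply, Matrix.replicateCol_apply, Matrix.replicateRow_apply,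
      Finset.sum_const, Finset.card_univ, Fintype.card_fin, smul_eq_mul, Fin.sum_univ_one]
    by_cases h : i = j <;>
      simp [h, Matrix.mul_apply, Matrix.replicateCol_apply, Matrix.replicateRow_apply, Fin.sum_univ_one] <;>
      field_simp <;> try ring
  erw [key, Matrix.det_smul, Matrix.det_one_add_replicateCol_mul_replicateRow]
  have h2 : (fun _ : Fin n => (1:ℝ)) ⬝ᵥ (fun _ : Fin n => -b⁻¹) = -((n:ℝ) * b⁻¹) := by
    simp [dotProduct, Finset.sum_const, Finset.card_univ]
  rw [h2]
  have hpow : b ^ n = b ^ (n - 1) * b := by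
    conv_lhs => rw [show n = (n - 1) + 1 by omega, pow_succ]
  rw [Fintype.card_fin, hpow]
  field_simp
  ring

lemma det_vertex (n : ℕ) (hn : 4 ≤ n) (x : ℝ) (hb : x - ((n:ℝ) - 4) ≠ 0) :
    ((x + 2) • (1 : Matrix (Fin n) (Fin n) ℝ) - inc n * (inc n)ᵀ).det
      = (x - (2 * (n:ℝ) - 4)) * (x - ((n:ℝ) - 4)) ^ (n - 1) := by
  rw [gram_vertex n hn]
  have key : (x + 2) • (1 : Matrix (Fin n) (Fin n) ℝ)
        - (((n : ℝ) - 2) • (1 : Matrix (Fin n) (Fin n) ℝ) + Matrix.of (fun _ _ => (1:ℝ)))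
      = (x - ((n:ℝ) - 4)) • (1 : Matrix (Fin n) (Fin n) ℝ) - Matrix.of (fun _ _ => (1:ℝ)) := by
    ext i j
    simp only [Matrix.sub_apply, Matrix.smul_apply, Matrix.add_apply, Matrix.one_apply,
      Matrix.of_apply, smul_eq_mul]
    by_cases h : i = j <;> simp [h] <;> ring
  rw [key, det_smul_one_sub_J n (by omega) _ hb]
  have : x - ((n:ℝ) - 4) - (n:ℝ) = x - (2 * (n:ℝ) - 4) := by ring
  rw [this]

lemma det_main (n : ℕ) (hn : 4 ≤ n) (x : ℝ) (ha : x + 2 ≠ 0) (hb : x - ((n:ℝ) - 4) ≠ 0) :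
    (x • (1 : Matrix (PairIdx n) (PairIdx n) ℝ) - lineAdj n).det
      = (x - (2 * (n:ℝ) - 4)) * (x - ((n:ℝ) - 4)) ^ (n - 1)
          * (x + 2) ^ (Fintype.card (PairIdx n) - n) := by
  set a : ℝ := x + 2 with haa
  have hH : x • (1 : Matrix (PairIdx n) (PairIdx n) ℝ) - lineAdj n
      = a • 1 - (inc n)ᵀ * inc n := by
    rw [gram_edge, haa, add_smul]
    ext e f
    simp only [Matrix.sub_apply, Matrix.smul_apply, Matrix.add_apply, Matrix.one_apply,
      smul_eq_mul]
    ring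
  rw [hH]
  have step1 : a • (1 : Matrix (PairIdx n) (PairIdx n) ℝ) - (inc n)ᵀ * inc n
      = a • (1 - (inc n)ᵀ * (a⁻¹ • inc n)) := by
    rw [Matrix.mul_smul, smul_sub, smul_smul, mul_inv_cancel₀ ha, one_smul]
  rw [step1, Matrix.det_smul, Matrix.det_one_sub_mul_comm]
  have step2 : (1 : Matrix (Fin n) (Fin n) ℝ) - (a⁻¹ • inc n) * (inc n)ᵀ
      = a⁻¹ • (a • 1 - inc n * (inc n)ᵀ) := by
    rw [smul_sub, smul_smul, inv_mul_cancel₀ ha, one_smul, Matrix.smul_mul]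
  rw [step2, Matrix.det_smul, det_vertex n hn x hb, Fintype.card_fin]
  have hmn : n ≤ Fintype.card (PairIdx n) := by
    rw [card_pairIdx]
    have h1 : n * 2 ≤ n * (n - 1) := Nat.mul_le_mul_left n (by omega)
    omega
  have hsplit : a ^ Fintype.card (PairIdx n)
      = a ^ (Fintype.card (PairIdx n) - n) * a ^ n := by
    rw [← pow_add]
    congr 1
    omega
  rw [hsplit]
  have hinv : (a⁻¹) ^ n * a ^ n = 1 := by
    rw [← mul_pow, inv_mul_cancel₀ ha, one_pow]
  field_simp
  linear_combination (4 + x - (n:ℝ) * 2) * hinv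

/-- The eigenvalues of the line graph of `K_n` are `2n-4` (multiplicity `1`),
`n-4` (multiplicity `n-1`) and `-2` (multiplicity `m-n`), stated via the
characteristic polynomial. -/
theorem stmt11 (n : ℕ) (hn : 4 ≤ n) :
    (lineAdj n).charpoly
      = (Polynomial.X - Polynomial.C (2 * (n : ℝ) - 4))
        * (Polynomial.X - Polynomial.C ((n : ℝ) - 4)) ^ (n - 1)
        * (Polynomial.X + Polynomial.C 2) ^ (n * (n - 1) / 2 - n) := by
  apply Polynomial.eq_of_infinite_eval_eq
  apply Set.Infinite.mono (s := ({-2, (n:ℝ) - 4} : Set ℝ)ᶜ)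
  · intro x hx
    simp only [Set.mem_compl_iff, Set.mem_insert_iff, Set.mem_singleton_iff, not_or] at hx
    obtain ⟨hx1, hx2⟩ := hx
    have ha : x + 2 ≠ 0 := fun h => hx1 (by linarith)
    have hb : x - ((n:ℝ) - 4) ≠ 0 := fun h => hx2 (by linarith)
    simp only [Set.mem_setOf_eq]
    rw [eval_charpoly', det_main n hn x ha hb, card_pairIdx]
    simp [Polynomial.eval_mul, Polynomial.eval_pow]
  · exact Set.Finite.infinite_compl ((Set.finite_singleton _).insert _)
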